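/- Suppose x, y, z are nonzero coprime integers with x^5 + y^5 = z^l for an odd prime l and 5 ∤ z, and write x + y = z_1^l, H_5(x,y) = z_2^l with z_1, z_2 coprime nonzero integers. Then (z_2/z_1^4, 5(x^2+y^2)/z_1^{2l}) is a rational solution of Y^2 = 20X^l + 5, and it is not equal to (1, 5) or (1, -5). -/

import Mathlib

theorem point_on_Cl_from_solution (l : ℕ) (hl : l.Prime) (hodd : Odd l)
    (x y z z₁ z₂ : ℤ) (hxy : IsCoprime x y) (heq : x ^ 5 + y ^ 5 = z ^ l)
    (hnz : x * y * z ≠ 0) (h5 : ¬ (5 : ℤ) ∣ z)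
    (hz₁ : z₁ ≠ 0) (hz₂ : z₂ ≠ 0) (hz₁z₂ : IsCoprime z₁ z₂)
    (hsum : x + y = z₁ ^ l)
    (hH : x ^ 4 - x ^ 3 * y + x ^ 2 * y ^ 2 - x * y ^ 3 + y ^ 4 = z₂ ^ l)
    (hz : z = z₁ * z₂) :
    (5 * ((x : ℚ) ^ 2 + (y : ℚ) ^ 2) / (z₁ : ℚ) ^ (2 * l)) ^ 2 =
        20 * ((z₂ : ℚ) / (z₁ : ℚ) ^ 4) ^ l + 5 ∧
    ¬ ((z₂ : ℚ) / (z₁ : ℚ) ^ 4 = 1 ∧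
        5 * ((x : ℚ) ^ 2 + (y : ℚ) ^ 2) / (z₁ : ℚ) ^ (2 * l) = 5) ∧
    ¬ ((z₂ : ℚ) / (z₁ : ℚ) ^ 4 = 1 ∧
        5 * ((x : ℚ) ^ 2 + (y : ℚ) ^ 2) / (z₁ : ℚ) ^ (2 * l) = -5) := by
  have hz1Q : (z₁ : ℚ) ≠ 0 := Int.cast_ne_zero.mpr hz₁
  have keyZ : 25 * (x ^ 2 + y ^ 2) ^ 2 = 20 * z₂ ^ l + 5 * (z₁ ^ l) ^ 4 := by
    rw [← hsum, ← hH]; ring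
  have keyQ : 25 * ((x : ℚ) ^ 2 + (y : ℚ) ^ 2) ^ 2
      = 20 * (z₂ : ℚ) ^ l + 5 * ((z₁ : ℚ) ^ l) ^ 4 := by
    exact_mod_cast keyZ
  have hpow1 : (z₁ : ℚ) ^ (2 * l) = ((z₁ : ℚ) ^ l) ^ 2 := by
    rw [← pow_mul, mul_comm]
  have hpow2 : ((z₁ : ℚ) ^ 4) ^ l = ((z₁ : ℚ) ^ l) ^ 4 := by
    rw [← pow_mul, ← pow_mul, mul_comm]
  refine ⟨?_, ?_, ?_⟩
  · rw [hpow1, div_pow, div_pow, hpow2]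
    have h4 : ((z₁ : ℚ) ^ l) ^ 4 ≠ 0 := pow_ne_zero _ (pow_ne_zero _ hz1Q)
    field_simp
    linear_combination keyQ
  · rintro ⟨h1, h2⟩
    -- z₂ = z₁ ^ 4, coprime forces z₁ = ±1
    have hz2 : (z₂ : ℚ) = (z₁ : ℚ) ^ 4 := by
      field_simp at h1; linarith [h1]
    have hz2' : z₂ = z₁ ^ 4 := by exact_mod_cast hz2
    have hdvd : z₁ ∣ z₂ := hz2' ▸ dvd_pow_self z₁ (by norm_num)
    have hu : IsUnit z₁ := hz₁z₂.isUnit_of_dvd' dvd_rfl hdvd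
    have hz1sq : (z₁ : ℚ) ^ (2 * l) = 1 := by
      rcases Int.isUnit_iff.mp hu with h | h <;> rw [h] <;> push_cast <;>
        simp [pow_mul]
    rw [hz1sq, div_one] at h2
    have h3 : (x : ℚ) ^ 2 + (y : ℚ) ^ 2 = 1 := by linarith
    have h3' : x ^ 2 + y ^ 2 = 1 := by exact_mod_cast h3
    have hx : x ≠ 0 := fun h => hnz (by simp [h])
    have hy : y ≠ 0 := fun h => hnz (by simp [h])
    nlinarith [sq_nonneg x, sq_nonneg y, Int.one_le_abs hx, Int.one_le_abs hy,
      sq_abs x, sq_abs y]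
  · rintro ⟨h1, h2⟩
    have hz2 : (z₂ : ℚ) = (z₁ : ℚ) ^ 4 := by
      field_simp at h1; linarith [h1]
    have hz2' : z₂ = z₁ ^ 4 := by exact_mod_cast hz2
    have hdvd : z₁ ∣ z₂ := hz2' ▸ dvd_pow_self z₁ (by norm_num)
    have hu : IsUnit z₁ := hz₁z₂.isUnit_of_dvd' dvd_rfl hdvd
    have hz1sq : (z₁ : ℚ) ^ (2 * l) = 1 := by
      rcases Int.isUnit_iff.mp hu with h | h <;> rw [h] <;> push_cast <;>
        simp [pow_mul]
    rw [hz1sq, div_one] at h2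
    have h3 : (x : ℚ) ^ 2 + (y : ℚ) ^ 2 = -1 := by linarith
    nlinarith [sq_nonneg (x : ℚ), sq_nonneg (y : ℚ)]
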